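/- Let $I$ be a nonempty finite set, let $(I_n)_{n\in\mathbb{N}}$ be random nonempty subsets of $I$ with $I_0 = I$, and let $i \in I$ be such that the events $([i \in I_n])_{n\in\mathbb{N}}$ are mutually independent and there exist $N \in \mathbb{N}\setminus\{0\}$ and $\pi \in (0,1]$ with $P\big(\bigcup_{j=n}^{n+N-1}[i \in I_j]\big) \ge \pi$ for all $n$. Define $\vartheta(n) = \max\{j \le n : i \in I_j\}$. Then $\limsup_{n} E(n - \vartheta(n)) \le N^2\,(1 + (1+\pi)/\pi^2) < +\infty$; in particular the expected delays $E(n - \vartheta(n))$ are bounded. -/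

import Mathlib

open MeasureTheory Filter ProbabilityTheory
open scoped Classical

theorem stmt5 {Ω ι : Type*} [MeasurableSpace Ω] [Fintype ι] [Nonempty ι]
    (P : Measure Ω) [IsProbabilityMeasure P]
    (I : ℕ → Ω → Set ι)
    (hne : ∀ n ω, (I n ω).Nonempty)
    (h0 : ∀ ω, I 0 ω = Set.univ)
    (i : ι)
    (hmeas : ∀ n, MeasurableSet {ω | i ∈ I n ω})
    (hindep : iIndepSet (fun n => {ω | i ∈ I n ω}) P)
    (N : ℕ) (hN : 1 ≤ N) (π : ℝ) (hπ0 : 0 < π) (hπ1 : π ≤ 1)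
    (hπ : ∀ n, ENNReal.ofReal π ≤ P (⋃ j ∈ Finset.Ico n (n + N), {ω | i ∈ I j ω})) :
    limsup
        (fun (n : ℕ) => ∫ ω, ((n : ℝ) - (Nat.findGreatest (fun j => i ∈ I j ω) n : ℝ)) ∂P)
        atTop ≤ (N : ℝ) ^ 2 * (1 + (1 + π) / π ^ 2) ∧
      ∃ M : ℝ, ∀ n : ℕ,
        ∫ ω, ((n : ℝ) - (Nat.findGreatest (fun j => i ∈ I j ω) n : ℝ)) ∂P ≤ M := by
  set A : ℕ → Set Ω := fun n => {ω | i ∈ I n ω} with hA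
  set r : ℝ := 1 - π with hrdef
  have hr0 : (0:ℝ) ≤ r := by simp [hrdef]; linarith
  have hr1 : r ≤ 1 := by simp [hrdef]; linarith
  -- independence of complements
  have hgen : (fun n => MeasurableSpace.generateFrom {(A n)ᶜ}) =
      (fun n => MeasurableSpace.generateFrom ({A n} : Set (Set Ω))) := by
    funext n
    refine le_antisymm (MeasurableSpace.generateFrom_le ?_) (MeasurableSpace.generateFrom_le ?_)
    · rintro t rfl
      exact (MeasurableSpace.measurableSet_generateFrom (Set.mem_singleton (A n))).compl
    · rintro t rfl
      simpa using (MeasurableSpace.measurableSet_generateFrom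
        (Set.mem_singleton ((A n)ᶜ))).compl
  have hindep' : iIndepSet (fun n => (A n)ᶜ) P := by
    unfold ProbabilityTheory.iIndepSet ProbabilityTheory.Kernel.iIndepSet at hindep ⊢
    rwa [hgen]
  have hprod : ∀ S : Finset ℕ, P (⋂ j ∈ S, (A j)ᶜ) = ∏ j ∈ S, P ((A j)ᶜ) :=
    fun S => hindep'.meas_biInter S
  -- block bound
  have hblock : ∀ a : ℕ, ∏ j ∈ Finset.Ioc a (a + N), P ((A j)ᶜ) ≤ ENNReal.ofReal r := by
    intro a
    rw [← hprod]
    have hiset : Finset.Ioc a (a + N) = Finset.Ico (a+1) (a+1+N) := by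
      ext j; simp only [Finset.mem_Ioc, Finset.mem_Ico]; omega
    have hset : (⋂ j ∈ Finset.Ioc a (a + N), (A j)ᶜ) =
        (⋃ j ∈ Finset.Ico (a+1) (a+1+N), A j)ᶜ := by
      rw [hiset, Set.compl_iUnion₂]
    rw [hset, measure_compl (Finset.measurableSet_biUnion _ fun j _ => hmeas j)
      (measure_ne_top _ _), measure_univ]
    have : ENNReal.ofReal r = 1 - ENNReal.ofReal π := by
      rw [hrdef, ENNReal.ofReal_sub _ (le_of_lt hπ0), ENNReal.ofReal_one]
    rw [this]
    exact tsub_le_tsub_left (hπ (a+1)) 1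
  have hpow : ∀ k m : ℕ, ∏ j ∈ Finset.Ioc k (k + m * N), P ((A j)ᶜ) ≤ ENNReal.ofReal r ^ m := by
    intro k m
    induction m with
    | zero => simp
    | succ m ih =>
      have hrw : k + (m+1) * N = (k + m * N) + N := by ring
      rw [hrw, ← Finset.prod_Ioc_consecutive _ (Nat.le_add_right k (m*N)) (Nat.le_add_right _ N),
        pow_succ]
      exact mul_le_mul' ih (hblock _)
  -- bound on the tail intersection
  have hIocP : ∀ n k : ℕ, P (⋂ j ∈ Finset.Ioc k n, (A j)ᶜ) ≤
      ENNReal.ofReal (r ^ ((n - k) / N)) := by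
    intro n k
    by_cases hkn : k ≤ n
    · have hmn : k + (n - k) / N * N ≤ n := by
        have := Nat.div_mul_le_self (n - k) N
        omega
      set m := (n - k) / N with hm
      rw [hprod, ENNReal.ofReal_pow hr0]
      calc ∏ j ∈ Finset.Ioc k n, P ((A j)ᶜ)
          = (∏ j ∈ Finset.Ioc k (k + m*N), P ((A j)ᶜ)) *
            ∏ j ∈ Finset.Ioc (k+m*N) n, P ((A j)ᶜ) :=
            (Finset.prod_Ioc_consecutive _ (Nat.le_add_right _ _) hmn).symm
        _ ≤ (∏ j ∈ Finset.Ioc k (k + m*N), P ((A j)ᶜ)) * 1 := by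
            refine mul_le_mul' le_rfl ?_
            exact Finset.prod_le_one (fun _ _ => zero_le) (fun j _ => prob_le_one)
        _ = ∏ j ∈ Finset.Ioc k (k + m*N), P ((A j)ᶜ) := mul_one _
        _ ≤ ENNReal.ofReal r ^ m := hpow k m
    · have he : Finset.Ioc k n = ∅ := by
        apply Finset.Ioc_eq_empty; omega
      have h0' : n - k = 0 := by omega
      simp [he, h0']
  -- description of the event {ϑ(n) ≤ k}
  have hEk : ∀ n k : ℕ, {ω | Nat.findGreatest (fun j => i ∈ I j ω) n ≤ k} =
      ⋂ j ∈ Finset.Ioc k n, (A j)ᶜ := by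
    intro n k
    ext ω
    simp only [Set.mem_setOf_eq, Set.mem_iInter, Finset.mem_Ioc, Set.mem_compl_iff, hA]
    constructor
    · rintro h j ⟨hj1, hj2⟩ hij
      exact absurd (Nat.le_findGreatest (P := fun j => i ∈ I j ω) hj2 hij) (by omega)
    · intro h
      by_contra hlt
      push_neg at hlt
      have hspec : i ∈ I (Nat.findGreatest (fun j => i ∈ I j ω) n) ω :=
        Nat.findGreatest_spec (P := fun j => i ∈ I j ω) (Nat.zero_le n) (by simp [h0 ω])
      exact h _ ⟨hlt, Nat.findGreatest_le n⟩ hspec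
  have hEkm : ∀ n k : ℕ, MeasurableSet {ω | Nat.findGreatest (fun j => i ∈ I j ω) n ≤ k} := by
    intro n k
    rw [hEk]
    exact Finset.measurableSet_biInter _ fun j _ => (hmeas j).compl
  -- key uniform bound
  have key : ∀ n : ℕ, ∫ ω, ((n : ℝ) - (Nat.findGreatest (fun j => i ∈ I j ω) n : ℝ)) ∂P ≤
      (N : ℝ) * π⁻¹ := by
    intro n
    have hfun : (fun ω => ((n : ℝ) - (Nat.findGreatest (fun j => i ∈ I j ω) n : ℝ))) =
        fun ω => ∑ k ∈ Finset.range n,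
          Set.indicator {ω' | Nat.findGreatest (fun j => i ∈ I j ω') n ≤ k} (fun _ => (1:ℝ)) ω := by
      funext ω
      set t := Nat.findGreatest (fun j => i ∈ I j ω) n with ht
      have htn : t ≤ n := Nat.findGreatest_le n
      have hind : ∀ k, Set.indicator {ω' | Nat.findGreatest (fun j => i ∈ I j ω') n ≤ k}
          (fun _ => (1:ℝ)) ω = if t ≤ k then 1 else 0 := by
        intro k
        simp [Set.indicator_apply, Set.mem_setOf_eq, ← ht]
      rw [Finset.sum_congr rfl (fun k _ => hind k), Finset.sum_boole]
      have hfilter : (Finset.range n).filter (fun k => t ≤ k) = Finset.Ico t n := by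
        ext x
        simp only [Finset.mem_filter, Finset.mem_range, Finset.mem_Ico]
        omega
      rw [hfilter, Nat.card_Ico, Nat.cast_sub htn]
    rw [hfun, integral_finset_sum _
      (fun k _ => (integrable_const (1:ℝ)).indicator (hEkm n k))]
    have hterm : ∀ k ∈ Finset.range n,
        ∫ ω, Set.indicator {ω' | Nat.findGreatest (fun j => i ∈ I j ω') n ≤ k}
          (fun _ => (1:ℝ)) ω ∂P
        = (P {ω' | Nat.findGreatest (fun j => i ∈ I j ω') n ≤ k}).toReal := by
      intro k _
      rw [integral_indicator_const _ (hEkm n k)]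
      simp
      rfl
    rw [Finset.sum_congr rfl hterm]
    have step1 : ∑ k ∈ Finset.range n,
        (P {ω' | Nat.findGreatest (fun j => i ∈ I j ω') n ≤ k}).toReal ≤
        ∑ k ∈ Finset.range n, r ^ ((n - k) / N) := by
      refine Finset.sum_le_sum fun k _ => ?_
      refine ENNReal.toReal_le_of_le_ofReal (pow_nonneg hr0 _) ?_
      rw [hEk]
      exact hIocP n k
    have step2 : ∑ k ∈ Finset.range n, r ^ ((n - k) / N) ≤
        ∑ j ∈ Finset.range n, r ^ (j / N) := by
      rw [← Finset.sum_range_reflect (fun k => r ^ ((n - k) / N)) n]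
      refine Finset.sum_le_sum fun j hj => ?_
      have hjn : j < n := Finset.mem_range.1 hj
      have : n - (n - 1 - j) = j + 1 := by omega
      rw [this]
      exact pow_le_pow_of_le_one hr0 hr1 (Nat.div_le_div_right (Nat.le_succ j))
    have step3 : ∑ j ∈ Finset.range n, r ^ (j / N) ≤
        ∑ m ∈ Finset.range n, (N : ℝ) * r ^ m := by
      rw [← Finset.sum_fiberwise_of_maps_to (g := fun j => j / N)
        (fun j hj => Finset.mem_range.2
          (lt_of_le_of_lt (Nat.div_le_self j N) (Finset.mem_range.1 hj)))
        (fun j => r ^ (j / N))]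
      refine Finset.sum_le_sum fun m _ => ?_
      have hsub : (Finset.range n).filter (fun j => j / N = m) ⊆
          Finset.Ico (m*N) (m*N+N) := by
        intro j hj
        obtain ⟨hj1, hj2⟩ := Finset.mem_filter.1 hj
        have h1 : m * N ≤ j := by
          rw [← hj2]; exact Nat.div_mul_le_self j N
        have h2 : j < m * N + N := by
          have hdiv : j / N < m + 1 := by omega
          have := (Nat.div_lt_iff_lt_mul (by omega : 0 < N)).1 hdiv
          calc j < (m + 1) * N := this
            _ = m * N + N := by ring
        exact Finset.mem_Ico.2 ⟨h1, h2⟩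
      calc ∑ j ∈ (Finset.range n).filter (fun j => j / N = m), r ^ (j / N)
          = ∑ j ∈ (Finset.range n).filter (fun j => j / N = m), r ^ m :=
            Finset.sum_congr rfl fun j hj => by rw [(Finset.mem_filter.1 hj).2]
        _ = (((Finset.range n).filter (fun j => j / N = m)).card : ℝ) * r ^ m := by
            rw [Finset.sum_const, nsmul_eq_mul]
        _ ≤ (N : ℝ) * r ^ m := by
            have hcard : ((Finset.range n).filter (fun j => j / N = m)).card ≤ N := by
              refine le_trans (Finset.card_le_card hsub) ?_
              rw [Nat.card_Ico]; omega
            exact mul_le_mul_of_nonneg_right (by exact_mod_cast hcard) (pow_nonneg hr0 m)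
    have hgeom : ∑ m ∈ Finset.range n, r ^ m ≤ π⁻¹ := by
      have h := geom_sum_mul r n
      have hrn : 0 ≤ r ^ n := pow_nonneg hr0 n
      rw [← one_div, le_div_iff₀ hπ0]
      nlinarith [h]
    calc ∑ k ∈ Finset.range n,
          (P {ω' | Nat.findGreatest (fun j => i ∈ I j ω') n ≤ k}).toReal
        ≤ ∑ k ∈ Finset.range n, r ^ ((n - k) / N) := step1
      _ ≤ ∑ j ∈ Finset.range n, r ^ (j / N) := step2
      _ ≤ ∑ m ∈ Finset.range n, (N : ℝ) * r ^ m := step3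
      _ = (N : ℝ) * ∑ m ∈ Finset.range n, r ^ m := by rw [Finset.mul_sum]
      _ ≤ (N : ℝ) * π⁻¹ := by
          refine mul_le_mul_of_nonneg_left hgeom ?_
          positivity
  have hN1 : (1:ℝ) ≤ (N : ℝ) := by exact_mod_cast hN
  have hNC : (N : ℝ) * π⁻¹ ≤ (N : ℝ) ^ 2 * (1 + (1 + π) / π ^ 2) := by
    have hπ2 : (0:ℝ) < π ^ 2 := pow_pos hπ0 2
    have hl : (N : ℝ) * π⁻¹ = (N : ℝ) / π := (div_eq_mul_inv _ _).symm
    have hrhs : (N : ℝ) ^ 2 * (1 + (1 + π) / π ^ 2) =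
        ((N : ℝ) ^ 2 * (π ^ 2 + 1 + π)) / π ^ 2 := by
      field_simp
      ring
    rw [hl, hrhs, div_le_div_iff₀ hπ0 hπ2]
    have hN0 : (0:ℝ) ≤ (N : ℝ) := le_trans zero_le_one hN1
    have hNπ : (0:ℝ) ≤ (N : ℝ) * π := mul_nonneg hN0 hπ0.le
    have e1 : (N : ℝ) * π ^ 2 ≤ (N : ℝ) * π := by
      nlinarith [mul_le_mul_of_nonneg_left hπ1 hNπ]
    have e2 : (N : ℝ) * π ≤ (N : ℝ) ^ 2 * π := by
      nlinarith [mul_nonneg (mul_nonneg (sub_nonneg.2 hN1) hN0) hπ0.le]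
    have e3 : (N : ℝ) ^ 2 * π ≤ (N : ℝ) ^ 2 * (π ^ 2 + 1 + π) * π := by
      nlinarith [mul_nonneg (mul_nonneg (sq_nonneg (N : ℝ))
        (by positivity : (0:ℝ) ≤ π ^ 2 + π)) hπ0.le]
    linarith
  have hnonneg : ∀ n : ℕ,
      0 ≤ ∫ ω, ((n : ℝ) - (Nat.findGreatest (fun j => i ∈ I j ω) n : ℝ)) ∂P := by
    intro n
    refine integral_nonneg fun ω => ?_
    simp only [Pi.zero_apply]
    have := Nat.findGreatest_le (P := fun j => i ∈ I j ω) n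
    have : ((Nat.findGreatest (fun j => i ∈ I j ω) n : ℕ) : ℝ) ≤ (n : ℝ) := by exact_mod_cast this
    linarith
  constructor
  · refine Filter.limsup_le_of_le ?_ ?_
    · have hb : Filter.IsBoundedUnder (· ≥ ·) Filter.atTop
          (fun n : ℕ => ∫ ω, ((n : ℝ) - (Nat.findGreatest (fun j => i ∈ I j ω) n : ℝ)) ∂P) :=
        Filter.isBoundedUnder_of ⟨0, fun n => hnonneg n⟩
      exact hb.isCoboundedUnder_le
    · exact Filter.Eventually.of_forall fun n => (key n).trans hNC
  · exact ⟨(N : ℝ) * π⁻¹, key⟩
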